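/- arXiv:1811.04618 — 2 statements merged into one kernel-verified Lean document; each statement's English description precedes it below -/
import Mathlib

section
/- Suppose G is a topological group with the invariant Steinhaus property for exponent k (i.e., for every symmetric, conjugation-invariant, countably syndetic subset W ⊆ G, the identity lies in the interior of W^k), and suppose every nonempty conjugation-invariant symmetric subset needed arises from a homomorphism preimage. Then every group homomorphism from G to a separable SIN topological group is continuous. -/
open scoped Pointwise

/-- `H` is SIN: the identity has a neighborhood basis of conjugation-invariant open sets. -/
def IsSIN (H : Type*) [Group H] [TopologicalSpace H] : Prop :=
  ∀ U ∈ nhds (1 : H), ∃ V ∈ nhds (1 : H),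
    IsOpen V ∧ V ⊆ U ∧ ∀ g : H, (fun x => g * x * g⁻¹) '' V = V

private lemma aux_pow_nhds {M : Type*} [Group M] [TopologicalSpace M] [IsTopologicalGroup M] :
    ∀ (n : ℕ) {U : Set M}, U ∈ nhds (1 : M) → ∃ V ∈ nhds (1 : M), V ^ n ⊆ U := by
  intro n
  induction n with
  | zero =>
    intro U hU
    refine ⟨U, hU, ?_⟩
    simpa [Set.one_subset] using mem_of_mem_nhds hU
  | succ n ih =>
    intro U hU
    obtain ⟨V₁, hV₁o, hV₁1, hV₁⟩ := exists_open_nhds_one_mul_subset hU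
    have hV₁n : V₁ ∈ nhds (1 : M) := hV₁o.mem_nhds hV₁1
    obtain ⟨V₂, hV₂n, hV₂⟩ := ih hV₁n
    refine ⟨V₁ ∩ V₂, Filter.inter_mem hV₁n hV₂n, ?_⟩
    calc (V₁ ∩ V₂) ^ (n + 1) = (V₁ ∩ V₂) ^ n * (V₁ ∩ V₂) := pow_succ _ _
      _ ⊆ V₂ ^ n * V₁ :=
          Set.mul_subset_mul (Set.pow_subset_pow_left Set.inter_subset_right)
            Set.inter_subset_left
      _ ⊆ V₁ * V₁ := Set.mul_subset_mul_right hV₂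
      _ ⊆ U := hV₁

private lemma aux_preimage_pow {G H : Type*} [Group G] [Group H] (φ : G →* H) (S : Set H) :
    ∀ n : ℕ, (φ ⁻¹' S) ^ n ⊆ φ ⁻¹' (S ^ n) := by
  intro n
  induction n with
  | zero =>
    simp only [pow_zero, Set.one_subset]
    simpa using Set.mem_one.2 rfl
  | succ n ih =>
    rw [pow_succ, pow_succ]
    intro x hx
    rcases Set.mem_mul.1 hx with ⟨a, ha, b, hb, rfl⟩
    exact Set.mem_preimage.2 (by
      rw [map_mul]
      exact Set.mul_mem_mul (ih ha) hb)

private lemma aux_conj_mem {H : Type*} [Group H] {S : Set H}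
    (hS : ∀ g : H, (fun x => g * x * g⁻¹) '' S = S) {x : H} (g : H) (hx : x ∈ S) :
    g * x * g⁻¹ ∈ S := by
  have h2 : g * x * g⁻¹ ∈ (fun x => g * x * g⁻¹) '' S := ⟨x, hx, rfl⟩
  rwa [hS g] at h2

theorem invariant_steinhaus_implies_IAC {G : Type u} [Group G] [TopologicalSpace G]
    [IsTopologicalGroup G] (k : ℕ)
    (hSt : ∀ W : Set G, W⁻¹ = W → (∀ g : G, (fun x => g * x * g⁻¹) '' W = W) →
      (∃ T : Set G, T.Countable ∧ T * W = Set.univ) → (1 : G) ∈ interior (W ^ k)) :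
    ∀ (H : Type u) [Group H] [TopologicalSpace H] [IsTopologicalGroup H]
      [TopologicalSpace.SeparableSpace H], IsSIN H → ∀ φ : G →* H, Continuous φ := by
  intro H _ _ _ _ hSIN φ
  apply continuous_of_continuousAt_one φ
  rw [ContinuousAt, map_one, Filter.tendsto_def]
  intro U hU
  -- get V₁ with V₁ ^ (2*k) ⊆ U
  obtain ⟨V₁, hV₁n, hV₁⟩ := aux_pow_nhds (2 * k) hU
  -- SIN: conjugation-invariant open V₂ ⊆ V₁
  obtain ⟨V₂, hV₂n, hV₂o, hV₂sub, hV₂conj⟩ := hSIN V₁ hV₁n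
  -- symmetrize
  set V : Set H := V₂ ∩ V₂⁻¹ with hVdef
  have hVo : IsOpen V := hV₂o.inter hV₂o.inv
  have hV1 : (1 : H) ∈ V := by
    constructor
    · exact mem_of_mem_nhds hV₂n
    · simpa using mem_of_mem_nhds hV₂n
  have hVsymm : V⁻¹ = V := by
    simp only [hVdef, Set.inter_inv, inv_inv]
    exact Set.inter_comm _ _
  have hVsub : V ⊆ V₂ := Set.inter_subset_left
  have hVconj : ∀ (g : H) {x : H}, x ∈ V → g * x * g⁻¹ ∈ V := by
    intro g x hx
    refine ⟨aux_conj_mem hV₂conj g hx.1, ?_⟩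
    have : (g * x * g⁻¹)⁻¹ = g * x⁻¹ * g⁻¹ := by group
    rw [Set.mem_inv, this]
    exact aux_conj_mem hV₂conj g hx.2
  have hVVconj : ∀ (g : H) {x : H}, x ∈ V * V → g * x * g⁻¹ ∈ V * V := by
    intro g x hx
    rcases Set.mem_mul.1 hx with ⟨a, ha, b, hb, rfl⟩
    have : g * (a * b) * g⁻¹ = (g * a * g⁻¹) * (g * b * g⁻¹) := by group
    rw [this]
    exact Set.mul_mem_mul (hVconj g ha) (hVconj g hb)
  -- define W
  set W : Set G := φ ⁻¹' (V * V) with hWdef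
  have hVVsymm : (V * V)⁻¹ = V * V := by rw [mul_inv_rev, hVsymm]
  have hWsymm : W⁻¹ = W := by
    ext x
    simp only [hWdef, Set.mem_inv, Set.mem_preimage, map_inv]
    rw [← Set.mem_inv, hVVsymm]
  have hWconj : ∀ g : G, (fun x => g * x * g⁻¹) '' W = W := by
    intro g
    ext y
    constructor
    · rintro ⟨x, hx, rfl⟩
      simp only [hWdef, Set.mem_preimage, map_mul, map_inv]
      exact hVVconj (φ g) hx
    · intro hy
      refine ⟨g⁻¹ * y * g, ?_, by group⟩
      simp only [hWdef, Set.mem_preimage, map_mul, map_inv]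
      have := hVVconj (φ g)⁻¹ (Set.mem_preimage.1 hy)
      simpa using this
  -- countable syndeticity
  classical
  obtain ⟨D, hDc, hDd⟩ := TopologicalSpace.exists_countable_dense H
  have hsynd : ∃ T : Set G, T.Countable ∧ T * W = Set.univ := by
    let f : H → G := fun d => if h : ∃ g : G, φ g ∈ {d} * V then h.choose else 1
    refine ⟨f '' D, hDc.image f, ?_⟩
    apply Set.eq_univ_of_forall
    intro g
    have hopen : IsOpen (φ g • V) := hVo.smul (φ g)
    have hne : (φ g • V).Nonempty := ⟨φ g, ⟨1, hV1, by simp [smul_eq_mul]⟩⟩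
    obtain ⟨d, hdD, hdV⟩ := hDd.exists_mem_open hopen hne
    rcases hdV with ⟨v, hv, hdv⟩
    have hex : ∃ g' : G, φ g' ∈ {d} * V := by
      refine ⟨g, ⟨d, rfl, v⁻¹, ?_, ?_⟩⟩
      · rw [← hVsymm]; simpa using hv
      · rw [← hdv]; simp [smul_eq_mul, mul_assoc]
    set t : G := f d with htdef
    have ht : φ t ∈ {d} * V := by
      simp only [htdef, f, dif_pos hex]
      exact hex.choose_spec
    refine Set.mem_mul.2 ⟨t, ⟨d, hdD, rfl⟩, t⁻¹ * g, ?_, by group⟩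
    -- show t⁻¹ * g ∈ W
    rcases ht with ⟨d', hd', w, hw, htw⟩
    rw [Set.mem_singleton_iff] at hd'
    subst hd'
    simp only [hWdef, Set.mem_preimage, map_mul, map_inv]
    have h1 : (φ t)⁻¹ * φ g = w⁻¹ * v⁻¹ := by
      rw [← htw, ← hdv]
      simp only [smul_eq_mul]
      group
    rw [h1]
    have hw' : w⁻¹ ∈ V := by rw [← hVsymm]; simpa using hw
    have hv' : v⁻¹ ∈ V := by rw [← hVsymm]; simpa using hv
    exact Set.mul_mem_mul hw' hv'
  -- apply Steinhaus
  have h1int := hSt W hWsymm hWconj hsynd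
  have hWk : W ^ k ⊆ φ ⁻¹' U := by
    refine (aux_preimage_pow φ (V * V) k).trans ?_
    apply Set.preimage_mono
    have : (V * V) ^ k = V ^ (2 * k) := by
      rw [← sq, ← pow_mul]
    rw [this]
    exact (Set.pow_subset_pow_left (hVsub.trans hV₂sub)).trans hV₁
  exact mem_nhds_iff.2 ⟨interior (W ^ k), interior_subset.trans hWk, isOpen_interior, h1int⟩
end

section
/- Let G be a topological group. If every homomorphism from G to any Polish SIN group is continuous, then every homomorphism from G to any separable SIN group is continuous. -/
open Filter Set Topology UniformSpace

universe u

/-- The uniformity of the completion of a uniform space with countably generated uniformity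
is countably generated. -/
theorem SINAux.cg_completion (α : Type*) [UniformSpace α]
    [(uniformity α).IsCountablyGenerated] :
    (uniformity (Completion α)).IsCountablyGenerated := by
  obtain ⟨U, hU⟩ := (uniformity α).exists_antitone_basis
  set f : α × α → Completion α × Completion α := fun p => (↑p.1, ↑p.2) with hf_def
  have hf : DenseRange f := Completion.denseRange_coe.prodMap Completion.denseRange_coe
  have hcomap : Filter.comap f (uniformity (Completion α)) = uniformity α :=
    Completion.comap_coe_eq_uniformity α
  have hb : (uniformity (Completion α)).HasBasis (fun _ : ℕ => True)
      (fun n => closure (f '' U n)) := by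
    constructor
    intro S
    constructor
    · intro hS
      rcases uniformity_hasBasis_closed.mem_iff.1 hS with ⟨C, ⟨hC, hCc⟩, hCS⟩
      have hpre : f ⁻¹' C ∈ uniformity α := by
        rw [← hcomap]; exact preimage_mem_comap hC
      rcases hU.1.mem_iff.1 hpre with ⟨n, -, hn⟩
      exact ⟨n, trivial, (closure_minimal (Set.image_subset_iff.2 hn) hCc).trans hCS⟩
    · rintro ⟨n, -, hn⟩
      refine mem_of_superset ?_ hn
      have hUn : U n ∈ uniformity α := hU.1.mem_of_mem trivial
      rw [← hcomap] at hUn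
      rcases mem_comap.1 hUn with ⟨V, hV, hVU⟩
      refine mem_of_superset (interior_mem_uniformity hV) ?_
      intro x hx
      rw [mem_closure_iff]
      intro o ho hxo
      rcases hf.exists_mem_open (ho.inter isOpen_interior) ⟨x, hxo, hx⟩ with ⟨p, hp⟩
      exact ⟨f p, hp.1, Set.mem_image_of_mem f (hVU (Set.mem_preimage.2 (interior_subset hp.2)))⟩
  exact hb.isCountablyGenerated

/-- A SIN topological additive group is a uniform group for the canonical (right) uniformity. -/
theorem SINAux.sin_uniformAddGroup {A : Type*} [AddGroup A] [TopologicalSpace A]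
    [IsTopologicalAddGroup A]
    (hsin : ∀ U ∈ nhds (0 : A), ∃ V ∈ nhds (0 : A), V ⊆ U ∧
      ∀ g : A, (fun x => g + x + -g) '' V = V) :
    @IsUniformAddGroup A (IsTopologicalAddGroup.rightUniformSpace A) _ := by
  letI := IsTopologicalAddGroup.rightUniformSpace A
  constructor
  refine Filter.tendsto_def.2 fun S hS => ?_
  have hS' : S ∈ Filter.comap (fun p : A × A => p.2 - p.1) (nhds 0) := by
    simpa only [uniformity_eq_comap_nhds_zero', sub_eq_add_neg] using hS
  obtain ⟨T, hT, hTS⟩ := mem_comap.1 hS'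
  obtain ⟨V, hV, hVT⟩ := exists_nhds_zero_half hT
  obtain ⟨V1, hV1, hV1V, hV1conj⟩ := hsin V hV
  have hnegmem : {x : A | -x ∈ V1} ∈ nhds (0 : A) := by
    have h1 : Filter.Tendsto (fun x : A => -x) (nhds 0) (nhds (0 : A)) := by
      simpa using (continuous_neg (G := A)).tendsto (0 : A)
    exact h1 hV1
  set V3 : Set A := V1 ∩ {x : A | -x ∈ V1} with hV3_def
  have hV3 : V3 ∈ nhds (0 : A) := inter_mem hV1 hnegmem
  have hmem : ∀ g x : A, x ∈ V3 → g + x + -g ∈ V3 := by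
    intro g x hx
    constructor
    · rw [← hV1conj g]; exact ⟨x, hx.1, rfl⟩
    · show -(g + x + -g) ∈ V1
      have hng : -(g + x + -g) = g + -x + -g := by
        simp only [neg_add_rev, neg_neg, add_assoc]
      rw [hng, ← hV1conj g]
      exact ⟨-x, hx.2, rfl⟩
  have hE : {q : (A × A) × (A × A) | (q.2.1 - q.1.1 ∈ V3) ∧ (q.2.2 - q.1.2 ∈ V3)}
      ∈ uniformity (A × A) := by
    rw [uniformity_prod]
    have hent : {q : A × A | q.2 - q.1 ∈ V3} ∈ uniformity A := by
      rw [uniformity_eq_comap_nhds_zero']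
      simp only [sub_eq_add_neg]
      exact preimage_mem_comap hV3
    exact inter_mem
      (mem_inf_of_left (preimage_mem_comap hent))
      (mem_inf_of_right (preimage_mem_comap hent))
  refine mem_of_superset hE ?_
  rintro ⟨⟨x, y⟩, ⟨x', y'⟩⟩ ⟨ha, hb⟩
  apply hTS
  show (x' - y') - (x - y) ∈ T
  have hd := hmem (-y) _ hb
  rw [neg_neg] at hd
  have hd' : -(-y + (y' - y) + y) ∈ V1 := hd.2
  have h2 : x + -(-y + (y' - y) + y) + -x ∈ V1 := by
    rw [← hV1conj x]
    exact ⟨_, hd', rfl⟩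
  have key : (x' - y') - (x - y) = (x' - x) + (x + -(-y + (y' - y) + y) + -x) := by
    simp only [sub_eq_add_neg, neg_add_rev, neg_neg, add_assoc, neg_add_cancel_left]
  rw [key]
  exact hVT _ (hV1V ha.1) _ (hV1V h2)

/-- From a SIN group, extract a decreasing sequence of symmetric conjugation-invariant
neighborhoods of `1` with `B (n+1) * B (n+1) ⊆ B n` and `B 0 ⊆ U0`. -/
theorem SINAux.exists_sin_seq {H : Type*} [Group H] [TopologicalSpace H] [IsTopologicalGroup H]
    (hsin : IsSIN H) {U0 : Set H} (h0 : U0 ∈ nhds (1 : H)) :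
    ∃ B : ℕ → Set H, (∀ n, B n ∈ nhds (1 : H)) ∧ (∀ n, ∀ x ∈ B n, x⁻¹ ∈ B n) ∧
      (∀ n, ∀ x ∈ B (n + 1), ∀ y ∈ B (n + 1), x * y ∈ B n) ∧
      (∀ n (g : H), (fun x => g * x * g⁻¹) '' B n = B n) ∧ B 0 ⊆ U0 := by
  have step : ∀ W : Set H, W ∈ nhds (1 : H) →
      ∃ S : Set H, (S ∈ nhds (1 : H) ∧ (∀ x ∈ S, x⁻¹ ∈ S) ∧
        ∀ g : H, (fun x => g * x * g⁻¹) '' S = S) ∧ ∀ x ∈ S, ∀ y ∈ S, x * y ∈ W := by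
    intro W hW
    obtain ⟨W', hW', hsplit⟩ := exists_nhds_one_split hW
    obtain ⟨V, hV, -, hVW', hVconj⟩ := hsin W' hW'
    have hVinv : {x : H | x⁻¹ ∈ V} ∈ nhds (1 : H) := by
      have h1 : Filter.Tendsto (fun x : H => x⁻¹) (nhds 1) (nhds (1 : H)) := by
        simpa using (continuous_inv (G := H)).tendsto (1 : H)
      exact h1 hV
    have hmem : ∀ g x : H, x ∈ V ∩ {x : H | x⁻¹ ∈ V} → g * x * g⁻¹ ∈ V ∩ {x : H | x⁻¹ ∈ V} := by
      intro g x hx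
      constructor
      · rw [← hVconj g]; exact ⟨x, hx.1, rfl⟩
      · show (g * x * g⁻¹)⁻¹ ∈ V
        have hng : (g * x * g⁻¹)⁻¹ = g * x⁻¹ * g⁻¹ := by
          simp only [mul_inv_rev, inv_inv, mul_assoc]
        rw [hng, ← hVconj g]
        exact ⟨x⁻¹, hx.2, rfl⟩
    refine ⟨V ∩ {x : H | x⁻¹ ∈ V}, ⟨inter_mem hV hVinv, ?_, ?_⟩, ?_⟩
    · rintro x ⟨h1, h2⟩
      exact ⟨h2, by simpa using h1⟩
    · intro g
      apply subset_antisymm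
      · rintro _ ⟨x, hx, rfl⟩
        exact hmem g x hx
      · intro z hz
        have h3 := hmem g⁻¹ z hz
        rw [inv_inv] at h3
        refine ⟨g⁻¹ * z * g, h3, ?_⟩
        simp [mul_assoc]
    · rintro x ⟨hx, -⟩ y ⟨hy, -⟩
      exact hsplit x (hVW' hx) y (hVW' hy)
  choose f hGood hMul using step
  let D : ℕ → {S : Set H // S ∈ nhds (1 : H) ∧ (∀ x ∈ S, x⁻¹ ∈ S) ∧
      ∀ g : H, (fun x => g * x * g⁻¹) '' S = S} :=
    fun n => Nat.rec ⟨f U0 h0, hGood U0 h0⟩ (fun _ p => ⟨f p.1 p.2.1, hGood p.1 p.2.1⟩) n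
  refine ⟨fun n => (D n).1, fun n => (D n).2.1, fun n => (D n).2.2.1, ?_, fun n => (D n).2.2.2, ?_⟩
  · intro n x hx y hy
    exact hMul (D n).1 (D n).2.1 x hx y hy
  · intro x hx
    have h1 : (1 : H) ∈ (D 0).1 := mem_of_mem_nhds (D 0).2.1
    have h2 := hMul U0 h0 x hx 1 h1
    rwa [mul_one] at h2

/-- A copy of a type, used to carry a different (group filter basis) topology. -/
def SINAux.Cpy (H : Type u) : Type u := H

/-- Identity map from the copy back to the original type. -/
def SINAux.Cpy.get {H : Type u} (x : SINAux.Cpy H) : H := x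

/-- Identity map from the original type to the copy. -/
def SINAux.Cpy.mk {H : Type u} (x : H) : SINAux.Cpy H := x

set_option maxHeartbeats 4000000
set_option synthInstance.maxHeartbeats 1000000

theorem polish_SIN_continuity_implies_separable_SIN_continuity
    {G : Type u} [Group G] [TopologicalSpace G] [IsTopologicalGroup G]
    (h : ∀ (H : Type u) [Group H] [TopologicalSpace H] [IsTopologicalGroup H] [PolishSpace H],
      IsSIN H → ∀ φ : G →* H, Continuous φ) :
    ∀ (H : Type u) [Group H] [TopologicalSpace H] [IsTopologicalGroup H]
      [TopologicalSpace.SeparableSpace H], IsSIN H → ∀ φ : G →* H, Continuous φ := by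
  intro H _ _ _ _ hsin φ
  have key : ∀ U ∈ nhds (1 : H), φ ⁻¹' U ∈ nhds (1 : G) := by
    intro U hU
    obtain ⟨B, hBnhds, hBsym, hBmul, hBconj, hB0⟩ := SINAux.exists_sin_seq hsin hU
    -- the additive copy of `H`
    letI : AddGroup (SINAux.Cpy H) := inferInstanceAs (AddGroup (Additive H))
    have hBanti : ∀ n, B (n + 1) ⊆ B n := by
      intro n x hx
      have h1 := hBmul n x hx 1 (mem_of_mem_nhds (hBnhds (n + 1)))
      rwa [mul_one] at h1
    have hBmono : ∀ m n, m ≤ n → B n ⊆ B m := by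
      intro m n hmn
      induction hmn with
      | refl => exact subset_rfl
      | step h ih => exact (hBanti _).trans ih
      -- fix names if needed
    let FB : AddGroupFilterBasis (SINAux.Cpy H) :=
    { sets := Set.range fun n => (B n : Set (SINAux.Cpy H))
      nonempty := ⟨B 0, ⟨0, rfl⟩⟩
      inter_sets := by
        rintro _ _ ⟨m, rfl⟩ ⟨n, rfl⟩
        exact ⟨B (max m n), ⟨max m n, rfl⟩,
          Set.subset_inter (hBmono m _ (le_max_left m n)) (hBmono n _ (le_max_right m n))⟩
      zero' := by
        rintro _ ⟨n, rfl⟩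
        have h1 : (1 : H) ∈ B n := mem_of_mem_nhds (hBnhds n)
        exact h1
      add' := by
        rintro _ ⟨n, rfl⟩
        refine ⟨B (n + 1), ⟨n + 1, rfl⟩, ?_⟩
        rintro _ ⟨x, hx, y, hy, rfl⟩
        exact hBmul n x hx y hy
      neg' := by
        rintro _ ⟨n, rfl⟩
        exact ⟨B n, ⟨n, rfl⟩, fun x hx => hBsym n x hx⟩
      conj' := by
        rintro g _ ⟨n, rfl⟩
        refine ⟨B n, ⟨n, rfl⟩, fun x hx => ?_⟩
        have h2 : (fun x : H => g.get * x * g.get⁻¹) '' B n = B n := hBconj n g.get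
        have h3 : g.get * x.get * g.get⁻¹ ∈ B n := h2 ▸ Set.mem_image_of_mem _ hx
        exact h3 }
    letI : TopologicalSpace (SINAux.Cpy H) := FB.topology
    haveI : IsTopologicalAddGroup (SINAux.Cpy H) := FB.isTopologicalAddGroup
    have hsin' : ∀ W ∈ nhds (0 : SINAux.Cpy H), ∃ V ∈ nhds (0 : SINAux.Cpy H), V ⊆ W ∧
        ∀ g : SINAux.Cpy H, (fun x => g + x + -g) '' V = V := by
      intro W hW
      rcases FB.nhds_zero_hasBasis.mem_iff.1 hW with ⟨V, ⟨n, rfl⟩, hVW⟩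
      refine ⟨B n, FB.mem_nhds_zero ⟨n, rfl⟩, hVW, ?_⟩
      intro g
      have h2 : (fun x : H => g.get * x * g.get⁻¹) '' B n = B n := hBconj n g.get
      exact h2
    letI : UniformSpace (SINAux.Cpy H) := IsTopologicalAddGroup.rightUniformSpace (SINAux.Cpy H)
    haveI : IsUniformAddGroup (SINAux.Cpy H) := SINAux.sin_uniformAddGroup hsin'
    haveI : (uniformity (SINAux.Cpy H)).IsCountablyGenerated := by
      haveI : (nhds (0 : SINAux.Cpy H)).IsCountablyGenerated := by
        have hb : (nhds (0 : SINAux.Cpy H)).HasBasis (fun _ : ℕ => True)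
            (fun n => (B n : Set (SINAux.Cpy H))) := by
          refine FB.nhds_zero_hasBasis.to_hasBasis ?_ ?_
          · rintro _ ⟨n, rfl⟩; exact ⟨n, trivial, subset_rfl⟩
          · intro n _; exact ⟨B n, ⟨n, rfl⟩, subset_rfl⟩
        exact hb.isCountablyGenerated
      rw [uniformity_eq_comap_nhds_zero' (SINAux.Cpy H)]
      exact Filter.comap.isCountablyGenerated _ _
    haveI : TopologicalSpace.SeparableSpace (SINAux.Cpy H) := by
      obtain ⟨D, hDc, hDd⟩ := TopologicalSpace.exists_countable_dense H
      refine ⟨⟨D, hDc, ?_⟩⟩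
      apply dense_iff_inter_open.2
      intro o ho hne
      have ho' : IsOpen (SINAux.Cpy.mk ⁻¹' o : Set H) := by
        rw [isOpen_iff_mem_nhds]
        intro x hx
        have h1 : o ∈ nhds (SINAux.Cpy.mk x) := ho.mem_nhds hx
        rcases (FB.nhds_hasBasis (SINAux.Cpy.mk x)).mem_iff.1 h1 with ⟨V, ⟨n, rfl⟩, hVo⟩
        have h2 : (fun y : H => x * y) '' (B n) ∈ nhds x := by
          rw [← map_mul_left_nhds_one x]
          exact Filter.image_mem_map (hBnhds n)
        exact mem_of_superset h2 (fun z hz => hVo hz)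
      have hne' : (SINAux.Cpy.mk ⁻¹' o : Set H).Nonempty := ⟨hne.choose.get, hne.choose_spec⟩
      obtain ⟨p, hp⟩ := dense_iff_inter_open.1 hDd _ ho' hne'
      exact ⟨SINAux.Cpy.mk p, hp.1, hp.2⟩
    haveI : (uniformity (Completion (SINAux.Cpy H))).IsCountablyGenerated :=
      SINAux.cg_completion _
    haveI hPolish : PolishSpace (Completion (SINAux.Cpy H)) := inferInstance
    -- conjugation invariance of the closures of the images of the `B n` in the completion
    have hSconj : ∀ n : ℕ, ∀ g : Completion (SINAux.Cpy H),
        (fun x => g + x + -g) ''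
            closure (((↑) : SINAux.Cpy H → Completion (SINAux.Cpy H)) '' B n)
          = closure (((↑) : SINAux.Cpy H → Completion (SINAux.Cpy H)) '' B n) := by
      intro n
      set S := closure (((↑) : SINAux.Cpy H → Completion (SINAux.Cpy H)) '' B n) with hS_def
      have him : ∀ g : Completion (SINAux.Cpy H), ∀ T : Set (Completion (SINAux.Cpy H)),
          (fun x => g + x + -g) '' T
            = ((Homeomorph.addLeft g).trans (Homeomorph.addRight (-g))) '' T :=
        fun g T => rfl
      have hcoe : ∀ a : SINAux.Cpy H,
          (fun x => (a : Completion (SINAux.Cpy H)) + x + -(a : Completion (SINAux.Cpy H)))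
            '' S = S := by
        intro a
        have h1 : (fun x => (a : Completion (SINAux.Cpy H)) + x
              + -(a : Completion (SINAux.Cpy H)))
            '' (((↑) : SINAux.Cpy H → Completion (SINAux.Cpy H)) '' B n)
            = ((↑) : SINAux.Cpy H → Completion (SINAux.Cpy H)) '' B n := by
          refine (Set.image_comp _ _ _).symm.trans ?_
          have h2 : ((fun x => (a : Completion (SINAux.Cpy H)) + x
                + -(a : Completion (SINAux.Cpy H)))
              ∘ ((↑) : SINAux.Cpy H → Completion (SINAux.Cpy H)))
              = ((↑) : SINAux.Cpy H → Completion (SINAux.Cpy H))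
                ∘ (fun x : SINAux.Cpy H => a + x + -a) := by
            funext x
            show (a : Completion (SINAux.Cpy H)) + (x : Completion (SINAux.Cpy H))
                + -(a : Completion (SINAux.Cpy H))
              = ((a + x + -a : SINAux.Cpy H) : Completion (SINAux.Cpy H))
            rw [Completion.coe_add, Completion.coe_add, Completion.coe_neg]
          rw [h2]; refine (Set.image_comp _ _ _).trans ?_
          have h3 : (fun x : SINAux.Cpy H => a + x + -a) '' B n = B n := hBconj n a.get
          rw [h3]
        calc (fun x => (a : Completion (SINAux.Cpy H)) + x
              + -(a : Completion (SINAux.Cpy H))) '' S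
            = ((Homeomorph.addLeft (a : Completion (SINAux.Cpy H))).trans
                (Homeomorph.addRight (-(a : Completion (SINAux.Cpy H))))) '' S := him _ _
          _ = closure (((Homeomorph.addLeft (a : Completion (SINAux.Cpy H))).trans
                (Homeomorph.addRight (-(a : Completion (SINAux.Cpy H)))))
                '' (((↑) : SINAux.Cpy H → Completion (SINAux.Cpy H)) '' B n)) :=
              Homeomorph.image_closure _ _
          _ = closure ((fun x => (a : Completion (SINAux.Cpy H)) + x
                + -(a : Completion (SINAux.Cpy H)))
                '' (((↑) : SINAux.Cpy H → Completion (SINAux.Cpy H)) '' B n)) := by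
              rw [← him]
          _ = S := by rw [h1]
      have hsub : ∀ g : Completion (SINAux.Cpy H), (fun x => g + x + -g) '' S ⊆ S := by
        intro g
        rintro _ ⟨x, hx, rfl⟩
        have hcl : IsClosed {g : Completion (SINAux.Cpy H) | g + x + -g ∈ S} := by
          have hcont : Continuous fun g : Completion (SINAux.Cpy H) => g + x + -g :=
            (continuous_id.add continuous_const).add continuous_neg
          exact IsClosed.preimage hcont isClosed_closure
        refine Completion.denseRange_coe.induction_on g hcl ?_
        intro a
        show (a : Completion (SINAux.Cpy H)) + x + -(a : Completion (SINAux.Cpy H)) ∈ S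
        rw [← hcoe a]
        exact Set.mem_image_of_mem _ hx
      intro g
      refine subset_antisymm (hsub g) ?_
      intro x hx
      have h3 : -g + x + - -g ∈ S := hsub (-g) (Set.mem_image_of_mem _ hx)
      refine ⟨-g + x + - -g, h3, ?_⟩
      show g + (-g + x + - -g) + -g = x
      simp only [neg_neg, ← add_assoc, add_neg_cancel, zero_add, add_neg_cancel_right]
    -- the completion (as a multiplicative group) is SIN
    have hsinK : IsSIN (Multiplicative (Completion (SINAux.Cpy H))) := by
      intro U' hU'
      have hU'' : U' ∈ nhds (0 : Completion (SINAux.Cpy H)) := hU'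
      obtain ⟨C, hC, hCclosed, hCU⟩ := exists_mem_nhds_isClosed_subset hU''
      have hpre : ((↑) : SINAux.Cpy H → Completion (SINAux.Cpy H)) ⁻¹' (interior C)
          ∈ nhds (0 : SINAux.Cpy H) := by
        have hcont := Completion.continuous_coe (SINAux.Cpy H)
        have h4 := hcont.tendsto (0 : SINAux.Cpy H)
        exact h4 (interior_mem_nhds.2 hC)
      rcases FB.nhds_zero_hasBasis.mem_iff.1 hpre with ⟨V, ⟨n, rfl⟩, hVpre⟩
      set S0 := closure (((↑) : SINAux.Cpy H → Completion (SINAux.Cpy H)) '' B n) with hS0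
      have hSnhds : S0 ∈ nhds (0 : Completion (SINAux.Cpy H)) :=
        Completion.isDenseInducing_coe.closure_image_mem_nhds (FB.mem_nhds_zero ⟨n, rfl⟩)
      have hSU : S0 ⊆ U' := by
        have h5 : ((↑) : SINAux.Cpy H → Completion (SINAux.Cpy H)) '' B n ⊆ interior C :=
          Set.image_subset_iff.2 hVpre
        exact (closure_mono h5).trans
          ((closure_minimal interior_subset hCclosed).trans hCU)
      refine ⟨interior S0, interior_mem_nhds.2 hSnhds, isOpen_interior,
        fun x hx => hSU (interior_subset hx), ?_⟩
      intro g
      show (fun x : Completion (SINAux.Cpy H) =>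
          Multiplicative.toAdd g + x + -Multiplicative.toAdd g) '' interior S0 = interior S0
      have heq : (fun x : Completion (SINAux.Cpy H) =>
            Multiplicative.toAdd g + x + -Multiplicative.toAdd g) '' interior S0
          = ((Homeomorph.addLeft (Multiplicative.toAdd g)).trans
              (Homeomorph.addRight (-Multiplicative.toAdd g))) '' interior S0 := rfl
      rw [heq, Homeomorph.image_interior]
      have heq2 : ((Homeomorph.addLeft (Multiplicative.toAdd g)).trans
            (Homeomorph.addRight (-Multiplicative.toAdd g))) '' S0
          = (fun x : Completion (SINAux.Cpy H) =>
              Multiplicative.toAdd g + x + -Multiplicative.toAdd g) '' S0 := rfl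
      rw [heq2, hSconj n (Multiplicative.toAdd g)]
    haveI : PolishSpace (Multiplicative (Completion (SINAux.Cpy H))) :=
      inferInstanceAs (PolishSpace (Completion (SINAux.Cpy H)))
    let ψ : G →* Multiplicative (Completion (SINAux.Cpy H)) :=
    { toFun := fun g => Multiplicative.ofAdd
        ((SINAux.Cpy.mk (φ g) : SINAux.Cpy H) : Completion (SINAux.Cpy H))
      map_one' := by
        show ((SINAux.Cpy.mk (φ 1) : SINAux.Cpy H) : Completion (SINAux.Cpy H))
          = ((0 : SINAux.Cpy H) : Completion (SINAux.Cpy H))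
        rw [map_one φ]
        rfl
      map_mul' := fun a b => by
        show ((SINAux.Cpy.mk (φ (a * b)) : SINAux.Cpy H) : Completion (SINAux.Cpy H))
          = ((SINAux.Cpy.mk (φ a) : SINAux.Cpy H) : Completion (SINAux.Cpy H))
            + ((SINAux.Cpy.mk (φ b) : SINAux.Cpy H) : Completion (SINAux.Cpy H))
        rw [map_mul φ]
        exact Completion.coe_add (SINAux.Cpy.mk (φ a)) (SINAux.Cpy.mk (φ b)) }
    have hψ : Continuous ψ := h (Multiplicative (Completion (SINAux.Cpy H))) hsinK ψ
    have hB0' : (B 0 : Set (SINAux.Cpy H)) ∈ nhds (0 : SINAux.Cpy H) :=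
      FB.mem_nhds_zero ⟨0, rfl⟩
    have hind := (Completion.isDenseInducing_coe
      (α := SINAux.Cpy H)).toIsInducing.nhds_eq_comap (0 : SINAux.Cpy H)
    rw [hind] at hB0'
    obtain ⟨W, hW, hWB⟩ := Filter.mem_comap.1 hB0'
    have h6 := hψ.tendsto (1 : G)
    rw [map_one ψ] at h6
    have h7 : ψ ⁻¹' W ∈ nhds (1 : G) := h6 hW
    refine Filter.mem_of_superset h7 ?_
    intro g hg
    exact hB0 (hWB hg)
  refine continuous_of_continuousAt_one φ (fun U hU => ?_)
  rw [map_one φ] at hU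
  rw [Filter.mem_map]
  exact key U hU
end
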